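/- arXiv:2601.05195 — 2 statements merged into one kernel-verified Lean document; each statement's English description precedes it below -/
import Mathlib

section
/- For every cubic graph H with vertex set V, the graph G obtained by adding a new vertex v adjacent to all vertices of H has basis number at most 3: the family of all triangles {v, a, b} over edges ab of H generates the cycle space of G and has edge-congestion at most 3. -/
variable {V : Type*} [Fintype V] [DecidableEq V]

/-- An F2-cycle relative to an edge set `E`: a finite set of edges, all belonging to `E`,
in which every vertex has even degree. -/
def IsF2CycleIn (E : Set (Sym2 V)) (C : Finset (Sym2 V)) : Prop :=
  (∀ e ∈ C, e ∈ E) ∧ ∀ v : V, Even ((C.filter (fun e => v ∈ e)).card)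

/-- `B` generates the cycle space of the graph with edge set `E`: every F2-cycle is a
symmetric difference of a subfamily of `B`. -/
def GeneratesIn (E : Set (Sym2 V)) (B : List (Finset (Sym2 V))) : Prop :=
  ∀ C : Finset (Sym2 V), IsF2CycleIn E C →
    ∃ l : List (Finset (Sym2 V)), l.Sublist B ∧ C = l.foldr symmDiff ∅

/-- The basis number of the graph with edge set `E`: the least `k` such that some
family of F2-cycles generating the cycle space uses each edge at most `k` times. -/
noncomputable def bnSet (E : Set (Sym2 V)) : ℕ :=
  sInf {k | ∃ B : List (Finset (Sym2 V)), (∀ X ∈ B, IsF2CycleIn E X) ∧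
    GeneratesIn E B ∧ ∀ e : Sym2 V, B.countP (fun X => decide (e ∈ X)) ≤ k}

/-- The basis number of a graph. -/
noncomputable def SimpleGraph.bn (G : SimpleGraph V) : ℕ := bnSet G.edgeSet
/-- An F2-cycle of `G`. -/
def SimpleGraph.IsF2Cycle {W : Type*} [DecidableEq W] (G : SimpleGraph W)
    (C : Finset (Sym2 W)) : Prop :=
  IsF2CycleIn G.edgeSet C

/-- The join of `H` with one new vertex (`none`) adjacent to every vertex of `H`. -/
def coneGraph (H : SimpleGraph V) : SimpleGraph (Option V) where
  Adj x y := x ≠ y ∧ ((∃ a b, x = some a ∧ y = some b ∧ H.Adj a b) ∨ x = none ∨ y = none)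
  symm := by
    constructor
    rintro x y ⟨hxy, h⟩
    refine ⟨hxy.symm, ?_⟩
    rcases h with ⟨a, b, hx, hy, hab⟩ | h | h
    · exact Or.inl ⟨b, a, hy, hx, hab.symm⟩
    · exact Or.inr (Or.inr h)
    · exact Or.inr (Or.inl h)
  loopless := ⟨fun x h => h.1 rfl⟩

/-- The triangle on the apex `none` and the two endpoints of an edge `e` of `H`,
as a set of edges of the cone graph. -/
def coneTriangle (e : Sym2 V) : Finset (Sym2 (Option V)) :=
  insert (e.map some)
    ((Finset.univ.filter (fun u => u ∈ e)).image fun u => s(Option.none, Option.some u))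

set_option linter.unusedSectionVars false

variable {H : SimpleGraph V} [DecidableRel H.Adj]

lemma mem_foldr_symmDiff {α : Type*} [DecidableEq α] (l : List (Finset α)) (x : α) :
    x ∈ l.foldr symmDiff ∅ ↔ Odd (l.countP (fun S => decide (x ∈ S))) := by
  induction l with
  | nil => simp
  | cons a t ih =>
    simp only [List.foldr_cons, Finset.mem_symmDiff, List.countP_cons, ih]
    by_cases h : x ∈ a <;>
      simp [h, Nat.odd_iff, Nat.even_iff] <;> omega

lemma countP_toList {α : Type*} (s : Finset α) (p : α → Prop) [DecidablePred p] :
    s.toList.countP (fun a => decide (p a)) = (s.filter p).card := by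
  show Multiset.countP p ↑s.1.toList = _
  rw [Multiset.coe_toList, Multiset.countP_eq_card_filter]
  rfl

lemma mem_coneTriangle {a b : V} {x : Sym2 (Option V)} :
    x ∈ coneTriangle s(a, b) ↔
      x = s(some a, some b) ∨ x = s(none, some a) ∨ x = s(none, some b) := by
  simp only [coneTriangle, Finset.mem_insert, Finset.mem_image, Finset.mem_filter,
    Finset.mem_univ, true_and, Sym2.map_pair_eq, Sym2.mem_iff]
  aesop

lemma horizontal_mem_coneTriangle {a b c d : V} :
    s(some a, some b) ∈ coneTriangle s(c, d) ↔ s(c, d) = s(a, b) := by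
  rw [mem_coneTriangle]
  simp [Sym2.eq_iff]
  aesop

lemma apex_mem_coneTriangle {u c d : V} :
    s((none : Option V), some u) ∈ coneTriangle s(c, d) ↔ u = c ∨ u = d := by
  rw [mem_coneTriangle]
  simp [Sym2.eq_iff]

lemma coneGraph_adj {x y : Option V} : (coneGraph H).Adj x y ↔
    x ≠ y ∧ ((∃ a b, x = some a ∧ y = some b ∧ H.Adj a b) ∨ x = none ∨ y = none) := Iff.rfl

lemma cone_adj_none_some (u : V) : (coneGraph H).Adj none (some u) :=
  coneGraph_adj.mpr ⟨by simp, Or.inr (Or.inl rfl)⟩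

lemma cone_adj_some_iff {a b : V} : (coneGraph H).Adj (some a) (some b) ↔ H.Adj a b := by
  constructor
  · intro hadj; rcases coneGraph_adj.mp hadj with ⟨hne, ⟨a', b', ha, hb, hab⟩ | h | h⟩
    · rw [Option.some.injEq] at ha hb; subst ha; subst hb; exact hab
    · exact absurd h (by simp)
    · exact absurd h (by simp)
  · intro h
    exact coneGraph_adj.mpr ⟨by simpa using h.ne, Or.inl ⟨a, b, rfl, rfl, h⟩⟩

lemma cone_edge_cases {x : Sym2 (Option V)} (hx : x ∈ (coneGraph H).edgeSet) :
    (∃ a b, H.Adj a b ∧ x = s(some a, some b)) ∨ ∃ u, x = s((none : Option V), some u) := by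
  induction x using Sym2.ind with
  | _ p q =>
    rw [SimpleGraph.mem_edgeSet] at hx
    match p, q with
    | some a, some b => exact Or.inl ⟨a, b, cone_adj_some_iff.mp hx, rfl⟩
    | none, some u => exact Or.inr ⟨u, rfl⟩
    | some a, none => exact Or.inr ⟨a, Sym2.eq_swap⟩
    | none, none => exact absurd rfl (coneGraph_adj.mp hx).1

lemma coneTriangle_pair (a b : V) :
    coneTriangle s(a, b) =
      {s((some a : Option V), some b), s(none, some a), s(none, some b)} := by
  ext x
  simp [mem_coneTriangle]


lemma nn_not_mem_coneTriangle (e : Sym2 V) :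
    s((none : Option V), none) ∉ coneTriangle e := by
  induction e using Sym2.ind with
  | _ c d =>
    rw [mem_coneTriangle]
    simp [Sym2.eq_iff]

lemma even_filter_coneTriangle {a b : V} (hab : a ≠ b) (w : Option V) :
    Even (((coneTriangle s(a, b)).filter (fun e => w ∈ e)).card) := by
  have hne1 : s((some a : Option V), some b) ∉
      ({s(none, some a), s(none, some b)} : Finset (Sym2 (Option V))) := by
    simp [Sym2.eq_iff]
  have hne2 : s((none : Option V), some a) ≠ s((none : Option V), some b) := by
    simp [Sym2.eq_iff, hab]
  have key : ((coneTriangle s(a, b)).filter (fun e => w ∈ e)).card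
      = (if w ∈ s((some a : Option V), some b) then 1 else 0)
      + ((if w ∈ s((none : Option V), some a) then 1 else 0)
      + (if w ∈ s((none : Option V), some b) then 1 else 0)) := by
    rw [coneTriangle_pair, Finset.card_filter, Finset.sum_insert hne1, Finset.sum_pair hne2]
  rw [key]
  match w with
  | none => simp [Sym2.mem_iff]
  | some u =>
    simp only [Sym2.mem_iff, Option.some.injEq]
    by_cases hua : u = a <;> by_cases hub : u = b
    · exact absurd (hua.symm.trans hub) hab
    · subst hua
      simp [hub]
    · subst hub
      simp [hua]
    · simp [hua, hub]

lemma coneTriangle_isF2Cycle {a b : V} (hab : H.Adj a b) :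
    (coneGraph H).IsF2Cycle (coneTriangle s(a, b)) := by
  refine ⟨?_, even_filter_coneTriangle hab.ne⟩
  intro x hx
  rw [mem_coneTriangle] at hx
  rcases hx with rfl | rfl | rfl
  · exact (SimpleGraph.mem_edgeSet _).mpr (cone_adj_some_iff.mpr hab)
  · exact (SimpleGraph.mem_edgeSet _).mpr (cone_adj_none_some a)
  · exact (SimpleGraph.mem_edgeSet _).mpr (cone_adj_none_some b)

lemma countP_map_coneTriangle (C : Finset (Sym2 (Option V))) (x : Sym2 (Option V)) :
    ((H.edgeFinset.toList.filter (fun e => decide (Sym2.map some e ∈ C))).map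
        coneTriangle).countP (fun X => decide (x ∈ X)) =
      (H.edgeFinset.filter (fun e => Sym2.map some e ∈ C ∧ x ∈ coneTriangle e)).card := by
  rw [List.countP_map, List.countP_filter, ← countP_toList]
  congr 1
  funext e
  simp [Bool.and_comm]

lemma countP_all (x : Sym2 (Option V)) :
    (H.edgeFinset.toList.map coneTriangle).countP (fun X => decide (x ∈ X)) =
      (H.edgeFinset.filter (fun e => x ∈ coneTriangle e)).card := by
  rw [List.countP_map, ← countP_toList]
  rfl

lemma filter_h_subset {a b : V} {P : Sym2 V → Prop} [DecidablePred P] :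
    (H.edgeFinset.filter (fun e => P e ∧ s(some a, some b) ∈ coneTriangle e)) ⊆ {s(a, b)} := by
  intro e he
  rw [Finset.mem_filter] at he
  obtain ⟨-, -, he⟩ := he
  revert he
  induction e using Sym2.ind with
  | _ c d =>
    intro he
    simpa using horizontal_mem_coneTriangle.mp he

lemma apex_parity (C : Finset (Sym2 (Option V)))
    (hE : ∀ e ∈ C, e ∈ (coneGraph H).edgeSet) (u : V)
    (hdeg : Even ((C.filter (fun e => (some u : Option V) ∈ e)).card)) :
    Odd ((H.edgeFinset.filter (fun e => Sym2.map some e ∈ C ∧ u ∈ e)).card) ↔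
      s((none : Option V), some u) ∈ C := by
  have hsplit : ((C.filter (fun e => (some u : Option V) ∈ e)).filter
        (fun y => (none : Option V) ∈ y)).card
      + ((C.filter (fun e => (some u : Option V) ∈ e)).filter
        (fun y => ¬ (none : Option V) ∈ y)).card
      = (C.filter (fun e => (some u : Option V) ∈ e)).card :=
    Finset.card_filter_add_card_filter_not _
  have hsub : ∀ y ∈ (C.filter (fun e => (some u : Option V) ∈ e)).filter
      (fun y => (none : Option V) ∈ y), y = s((none : Option V), some u) := by
    intro y hy
    simp only [Finset.mem_filter] at hy
    obtain ⟨⟨-, hu⟩, hn⟩ := hy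
    revert hu hn
    induction y using Sym2.ind with
    | _ p q =>
      intro hu hn
      rw [Sym2.mem_iff] at hu hn
      rcases hu with hu | hu <;> rcases hn with hn | hn <;>
        first
          | (rw [← hn] at hu; simp at hu)
          | (rw [← hu] at hn; simp at hn)
          | ((rw [← hu, ← hn]; try exact Sym2.eq_swap); done)
          | ((rw [← hn, ← hu]; try exact Sym2.eq_swap); done)
  have h1 : ((C.filter (fun e => (some u : Option V) ∈ e)).filter
      (fun y => (none : Option V) ∈ y)).card
      = if s((none : Option V), some u) ∈ C then 1 else 0 := by
    split_ifs with h
    · rw [Finset.eq_singleton_iff_unique_mem.mpr ⟨?_, hsub⟩, Finset.card_singleton]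
      refine Finset.mem_filter.mpr ⟨Finset.mem_filter.mpr ⟨h, ?_⟩, ?_⟩ <;> simp
    · refine Finset.card_eq_zero.mpr (Finset.eq_empty_of_forall_notMem ?_)
      intro y hy
      have hyC : y ∈ C := (Finset.mem_filter.mp (Finset.mem_filter.mp hy).1).1
      rw [hsub y hy] at hyC
      exact h hyC
  have h2 : (H.edgeFinset.filter (fun e => Sym2.map some e ∈ C ∧ u ∈ e)).card
      = ((C.filter (fun e => (some u : Option V) ∈ e)).filter
        (fun y => ¬ (none : Option V) ∈ y)).card := by
    apply Finset.card_bij (fun e _ => Sym2.map some e)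
    · intro e he
      rw [Finset.mem_filter] at he
      obtain ⟨-, heC, heu⟩ := he
      refine Finset.mem_filter.mpr ⟨Finset.mem_filter.mpr ⟨heC, ?_⟩, ?_⟩
      · exact Sym2.mem_map.mpr ⟨u, heu, rfl⟩
      · intro hn
        obtain ⟨w, -, hw⟩ := Sym2.mem_map.mp hn
        exact Option.some_ne_none w hw
    · intro e1 h1' e2 h2' heq
      exact Sym2.map.injective (Option.some_injective V) heq
    · intro y hy
      rw [Finset.mem_filter, Finset.mem_filter] at hy
      obtain ⟨⟨hyC, hyu⟩, hyn⟩ := hy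
      rcases cone_edge_cases (hE y hyC) with ⟨a, b, hab, rfl⟩ | ⟨w, rfl⟩
      · refine ⟨s(a, b), Finset.mem_filter.mpr ⟨SimpleGraph.mem_edgeFinset.mpr ((SimpleGraph.mem_edgeSet _).mpr hab), ?_, ?_⟩, ?_⟩
        · rw [Sym2.map_pair_eq]; exact hyC
        · rw [Sym2.mem_iff] at hyu ⊢
          rcases hyu with h | h
          · exact Or.inl (Option.some_injective V h)
          · exact Or.inr (Option.some_injective V h)
        · rw [Sym2.map_pair_eq]
      · exact absurd (Sym2.mem_iff.mpr (Or.inl rfl)) hyn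
  rw [h2]
  rw [h1] at hsplit
  rw [← hsplit] at hdeg
  split_ifs at hdeg with h
  · simp only [h, iff_true]
    rcases hdeg with ⟨k, hk⟩
    exact ⟨k - 1, by omega⟩
  · simp only [h, iff_false, Nat.odd_iff, Nat.even_iff] at hdeg ⊢
    omega

lemma gen_mem_apex (C : Finset (Sym2 (Option V)))
    (hC : IsF2CycleIn (coneGraph H).edgeSet C) (u : V) :
    s((none : Option V), some u) ∈ C ↔
      Odd ((H.edgeFinset.filter
        (fun e => Sym2.map some e ∈ C ∧ s((none : Option V), some u) ∈ coneTriangle e)).card) := by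
  have hfil : H.edgeFinset.filter
      (fun e => Sym2.map some e ∈ C ∧ s((none : Option V), some u) ∈ coneTriangle e)
      = H.edgeFinset.filter (fun e => Sym2.map some e ∈ C ∧ u ∈ e) := by
    apply Finset.filter_congr
    intro e he
    refine and_congr_right fun _ => ?_
    revert he
    induction e using Sym2.ind with
    | _ c d =>
      intro he
      rw [apex_mem_coneTriangle, Sym2.mem_iff]
  rw [hfil]
  exact (apex_parity C hC.1 u (hC.2 (some u))).symm

lemma gen_mem (C : Finset (Sym2 (Option V)))
    (hC : IsF2CycleIn (coneGraph H).edgeSet C) (x : Sym2 (Option V)) :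
    x ∈ C ↔ Odd ((H.edgeFinset.filter
      (fun e => Sym2.map some e ∈ C ∧ x ∈ coneTriangle e)).card) := by
  induction x using Sym2.ind with
  | _ p q =>
    match p, q with
    | some a, some b =>
      have hfil : H.edgeFinset.filter
          (fun e => Sym2.map some e ∈ C ∧ s(some a, some b) ∈ coneTriangle e)
          = if s((some a : Option V), some b) ∈ C then {s(a, b)} else ∅ := by
        split_ifs with h
        · apply subset_antisymm filter_h_subset
          intro e he
          rw [Finset.mem_singleton] at he
          subst he
          have hadj : H.Adj a b := cone_adj_some_iff.mp ((SimpleGraph.mem_edgeSet _).mp (hC.1 _ h))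
          refine Finset.mem_filter.mpr ⟨SimpleGraph.mem_edgeFinset.mpr ((SimpleGraph.mem_edgeSet _).mpr hadj), ?_, ?_⟩
          · rw [Sym2.map_pair_eq]; exact h
          · exact mem_coneTriangle.mpr (Or.inl rfl)
        · apply Finset.eq_empty_of_forall_notMem
          intro e he
          rw [Finset.mem_filter] at he
          obtain ⟨-, hm, ht⟩ := he
          revert hm ht
          induction e using Sym2.ind with
          | _ c d =>
            intro hm ht
            rw [horizontal_mem_coneTriangle.mp ht, Sym2.map_pair_eq] at hm
            exact h hm
      rw [hfil]
      split_ifs with h <;> simp [h]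
    | none, some u => exact gen_mem_apex C hC u
    | some a, none =>
      rw [show s(some a, (none : Option V)) = s((none : Option V), some a) from Sym2.eq_swap]
      exact gen_mem_apex C hC a
    | none, none =>
      constructor
      · intro h
        exact absurd rfl (coneGraph_adj.mp ((SimpleGraph.mem_edgeSet _).mp (hC.1 _ h))).1
      · intro h
        exfalso
        rw [Finset.filter_eq_empty_iff.mpr (fun e _ => fun hmem =>
          nn_not_mem_coneTriangle e hmem.2), Finset.card_empty] at h
        simp at h

lemma congestion_apex (u : V) :
    (H.edgeFinset.filter (fun e => s((none : Option V), some u) ∈ coneTriangle e)).card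
      = H.degree u := by
  have hfil : H.edgeFinset.filter (fun e => s((none : Option V), some u) ∈ coneTriangle e)
      = H.edgeFinset.filter (fun e => u ∈ e) := by
    apply Finset.filter_congr
    intro e he
    revert he
    induction e using Sym2.ind with
    | _ c d =>
      intro he
      rw [apex_mem_coneTriangle, Sym2.mem_iff]
  rw [hfil, ← SimpleGraph.incidenceFinset_eq_filter, SimpleGraph.card_incidenceFinset_eq_degree]

/-- for a cubic graph `H`, the graph `G` obtained by adding a vertex
adjacent to all of `H` has basis number at most 3: the triangles through the apex over
the edges of `H` are F2-cycles generating the cycle space of `G`, with edge-congestion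
at most 3. -/
theorem bn_cone_of_cubic_le_three (H : SimpleGraph V) [DecidableRel H.Adj]
    (hcubic : H.IsRegularOfDegree 3) :
    (∀ X ∈ H.edgeFinset.toList.map coneTriangle, (coneGraph H).IsF2Cycle X) ∧
    GeneratesIn (coneGraph H).edgeSet (H.edgeFinset.toList.map coneTriangle) ∧
    (∀ e : Sym2 (Option V),
      (H.edgeFinset.toList.map coneTriangle).countP (fun X => decide (e ∈ X)) ≤ 3) ∧
    (coneGraph H).bn ≤ 3 := by
  have hcyc : ∀ X ∈ H.edgeFinset.toList.map coneTriangle, (coneGraph H).IsF2Cycle X := by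
    intro X hX
    rw [List.mem_map] at hX
    obtain ⟨e, he, rfl⟩ := hX
    rw [Finset.mem_toList] at he
    revert he
    induction e using Sym2.ind with
    | _ a b =>
      intro he
      exact coneTriangle_isF2Cycle ((SimpleGraph.mem_edgeSet _).mp (SimpleGraph.mem_edgeFinset.mp he))
  have hgen : GeneratesIn (coneGraph H).edgeSet (H.edgeFinset.toList.map coneTriangle) := by
    intro C hC
    refine ⟨(H.edgeFinset.toList.filter (fun e => decide (Sym2.map some e ∈ C))).map coneTriangle,
      List.filter_sublist.map coneTriangle, ?_⟩
    ext x
    rw [mem_foldr_symmDiff, countP_map_coneTriangle, ← gen_mem C hC x]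
  have hcount : ∀ x : Sym2 (Option V),
      (H.edgeFinset.toList.map coneTriangle).countP (fun X => decide (x ∈ X)) ≤ 3 := by
    intro x
    rw [countP_all]
    induction x using Sym2.ind with
    | _ p q =>
      match p, q with
      | some a, some b =>
        have hsub : H.edgeFinset.filter (fun e => s(some a, some b) ∈ coneTriangle e)
            ⊆ {s(a, b)} := by
          intro e he
          rw [Finset.mem_filter] at he
          obtain ⟨-, he⟩ := he
          revert he
          induction e using Sym2.ind with
          | _ c d =>
            intro he
            simpa using horizontal_mem_coneTriangle.mp he
        calc (H.edgeFinset.filter (fun e => s(some a, some b) ∈ coneTriangle e)).card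
            ≤ ({s(a, b)} : Finset (Sym2 V)).card := Finset.card_le_card hsub
          _ ≤ 3 := by simp
      | none, some u => rw [congestion_apex, hcubic u]
      | some a, none =>
        rw [show s(some a, (none : Option V)) = s((none : Option V), some a) from Sym2.eq_swap,
          congestion_apex, hcubic a]
      | none, none =>
        rw [Finset.filter_eq_empty_iff.mpr (fun e _ => nn_not_mem_coneTriangle e),
          Finset.card_empty]
        omega
  refine ⟨hcyc, hgen, hcount, ?_⟩
  exact Nat.sInf_le ⟨H.edgeFinset.toList.map coneTriangle, hcyc, hgen, hcount⟩
end

section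
/- Let G be a graph, (X, Y) a separation of G with G[X ∩ Y] connected such that both X \ Y and Y \ X are nonempty, and suppose bn(G[X]) ≤ b1 and bn(G[Y]) ≤ b2. Then bn(G) ≤ b1 + b2. -/
variable {V : Type*} [Fintype V] [DecidableEq V]

/-- The restriction `G[X]` of `G` to a vertex set `X`, kept on the same vertex type
(only edges with both endpoints in `X` remain). -/
def SimpleGraph.restrict (G : SimpleGraph V) (X : Set V) : SimpleGraph V where
  Adj u v := G.Adj u v ∧ u ∈ X ∧ v ∈ X
  symm := ⟨fun _ _ h => ⟨h.1.symm, h.2.2, h.2.1⟩⟩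
  loopless := ⟨fun v h => G.loopless.irrefl v h.1⟩

noncomputable def pdeg (C : Finset (Sym2 V)) (v : V) : ZMod 2 :=
  ((C.filter (fun e => v ∈ e)).card : ZMod 2)

lemma pdeg_eq_sum (C : Finset (Sym2 V)) (v : V) :
    pdeg C v = ∑ e ∈ Finset.univ, (if e ∈ C ∧ v ∈ e then (1 : ZMod 2) else 0) := by
  classical
  rw [pdeg, Finset.card_filter, Nat.cast_sum]
  rw [← Finset.sum_subset (Finset.subset_univ C) (by intro e _ he; simp [he])]
  refine Finset.sum_congr rfl fun e he => ?_
  simp [he]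

lemma pdeg_symmDiff (A B : Finset (Sym2 V)) (v : V) :
    pdeg (symmDiff A B) v = pdeg A v + pdeg B v := by
  classical
  rw [pdeg_eq_sum, pdeg_eq_sum, pdeg_eq_sum, ← Finset.sum_add_distrib]
  refine Finset.sum_congr rfl fun e _ => ?_
  by_cases hA : e ∈ A <;> by_cases hB : e ∈ B <;> by_cases hv : v ∈ e <;>
    simp [Finset.mem_symmDiff, hA, hB, hv] <;> decide

lemma zmod2_cases : ∀ x : ZMod 2, x = 0 ∨ x = 1 := by decide

omit [Fintype V] in
lemma pdeg_empty (v : V) : pdeg (∅ : Finset (Sym2 V)) v = 0 := by simp [pdeg]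

omit [Fintype V] in
lemma even_iff_pdeg (C : Finset (Sym2 V)) (v : V) :
    Even ((C.filter (fun e => v ∈ e)).card) ↔ pdeg C v = 0 := by
  rw [pdeg, ZMod.natCast_eq_zero_iff]; exact even_iff_two_dvd

lemma foldr_symmDiff_eq (l : List (Finset (Sym2 V))) (x : Finset (Sym2 V)) :
    l.foldr symmDiff x = symmDiff (l.foldr symmDiff ∅) x := by
  induction l with
  | nil => rw [List.foldr_nil, List.foldr_nil, ← Finset.bot_eq_empty, bot_symmDiff]
  | cons a l ih => simp [List.foldr_cons, ih, symmDiff_assoc]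

lemma foldr_symmDiff_append (l₁ l₂ : List (Finset (Sym2 V))) :
    (l₁ ++ l₂).foldr symmDiff ∅ = symmDiff (l₁.foldr symmDiff ∅) (l₂.foldr symmDiff ∅) := by
  rw [List.foldr_append, foldr_symmDiff_eq]

def listF (l : List (Sym2 V)) : Finset (Sym2 V) := l.foldr (fun e s => symmDiff {e} s) ∅

omit [Fintype V] in
lemma mem_listF {l : List (Sym2 V)} {e : Sym2 V} (h : e ∈ listF l) : e ∈ l := by
  induction l with
  | nil => simp [listF] at h
  | cons a l ih =>
    simp only [listF, List.foldr_cons] at h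
    rcases Finset.mem_symmDiff.1 h with ⟨h1, _⟩ | ⟨h1, _⟩
    · simp at h1; simp [h1]
    · exact List.mem_cons_of_mem _ (ih h1)

omit [Fintype V] in
lemma pdeg_singleton (e : Sym2 V) (v : V) :
    pdeg {e} v = if v ∈ e then 1 else 0 := by
  by_cases h : v ∈ e <;> simp [pdeg, Finset.filter_singleton, h]

noncomputable def walkF {G' : SimpleGraph V} {a b : V} (w : G'.Walk a b) : Finset (Sym2 V) :=
  listF w.edges

lemma pdeg_walkF {G' : SimpleGraph V} {a b : V} (w : G'.Walk a b) (v : V) :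
    pdeg (walkF w) v = (if v = a then 1 else 0) + (if v = b then 1 else 0) := by
  induction w with
  | nil =>
    simp only [walkF, SimpleGraph.Walk.edges_nil, listF, List.foldr_nil, pdeg,
      Finset.filter_empty, Finset.card_empty, Nat.cast_zero]
    split_ifs <;> decide
  | @cons a c b h w ih =>
    have hw : walkF (SimpleGraph.Walk.cons h w) = symmDiff {s(a, c)} (walkF w) := by
      simp [walkF, listF]
    rw [hw, pdeg_symmDiff, pdeg_singleton, ih]
    have hne : a ≠ c := h.ne
    by_cases h1 : v = a <;> by_cases h2 : v = c <;> by_cases h3 : v = b <;>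
      simp_all [Sym2.mem_iff] <;> decide

omit [Fintype V] in
lemma walkF_edges {G' : SimpleGraph V} {a b : V} (w : G'.Walk a b) :
    ∀ e ∈ walkF w, e ∈ G'.edgeSet :=
  fun _ he => w.edges_subset_edgeSet (mem_listF he)

lemma exists_join (G : SimpleGraph V) (s : Set V) (r : V)
    (hreach : ∀ t ∈ s, (G.restrict s).Reachable t r)
    (T : Finset V) (hT : ∀ t ∈ T, t ∈ s) :
    ∃ J : Finset (Sym2 V), (∀ e ∈ J, e ∈ (G.restrict s).edgeSet) ∧
      ∀ v, pdeg J v = (if v ∈ T then 1 else 0) +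
        (T.card : ZMod 2) * (if v = r then 1 else 0) := by
  classical
  revert hT
  induction T using Finset.induction_on with
  | empty => exact fun _ => ⟨∅, by simp, fun v => by simp [pdeg_empty]⟩
  | @insert t T htT ih =>
    intro hT
    obtain ⟨J, hJe, hJd⟩ := ih (fun x hx => hT x (Finset.mem_insert_of_mem hx))
    obtain ⟨w⟩ := hreach t (hT t (Finset.mem_insert_self t T))
    refine ⟨symmDiff (walkF w) J, ?_, ?_⟩
    · intro e he
      rcases Finset.mem_symmDiff.1 he with ⟨h1, _⟩ | ⟨h1, _⟩
      · exact walkF_edges w e h1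
      · exact hJe e h1
    · intro v
      rw [pdeg_symmDiff, pdeg_walkF, hJd, Finset.card_insert_of_notMem htT]
      push_cast
      by_cases h1 : v = t <;> by_cases h2 : v ∈ T <;> by_cases h3 : v = r <;>
        simp_all [Finset.mem_insert] <;> ring

lemma exists_basis (E : Set (Sym2 V)) :
    ∃ B : List (Finset (Sym2 V)), (∀ X ∈ B, IsF2CycleIn E X) ∧ GeneratesIn E B ∧
      ∀ e : Sym2 V, B.countP (fun X => decide (e ∈ X)) ≤ bnSet E := by
  classical
  have hne : {k | ∃ B : List (Finset (Sym2 V)), (∀ X ∈ B, IsF2CycleIn E X) ∧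
      GeneratesIn E B ∧ ∀ e : Sym2 V, B.countP (fun X => decide (e ∈ X)) ≤ k}.Nonempty := by
    refine ⟨(Finset.univ.filter fun C => IsF2CycleIn E C).toList.length,
      (Finset.univ.filter fun C => IsF2CycleIn E C).toList, ?_, ?_, ?_⟩
    · intro X hX
      simpa using (Finset.mem_filter.1 (Finset.mem_toList.1 hX)).2
    · intro C hC
      refine ⟨[C], List.singleton_sublist.mpr ?_, ?_⟩
      · exact Finset.mem_toList.2 (Finset.mem_filter.2 ⟨Finset.mem_univ _, hC⟩)
      · rw [List.foldr_cons, List.foldr_nil, ← Finset.bot_eq_empty, symmDiff_bot]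
    · intro e; exact List.countP_le_length
  simpa [bnSet] using Nat.sInf_mem hne

omit [Fintype V] [DecidableEq V] in
lemma restrict_mem_of_mem_edge {G : SimpleGraph V} {s : Set V} {e : Sym2 V}
    (he : e ∈ (G.restrict s).edgeSet) {v : V} (hv : v ∈ e) : v ∈ s := by
  induction e with
  | _ a b =>
    rw [SimpleGraph.mem_edgeSet] at he
    rcases Sym2.mem_iff.1 hv with rfl | rfl
    · exact he.2.1
    · exact he.2.2

omit [Fintype V] [DecidableEq V] in
lemma restrict_edge_mono {G : SimpleGraph V} {s s' : Set V} (h : s ⊆ s') :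
    (G.restrict s).edgeSet ⊆ (G.restrict s').edgeSet := by
  intro e he
  induction e with
  | _ a b =>
    rw [SimpleGraph.mem_edgeSet] at he ⊢
    exact ⟨he.1, h he.2.1, h he.2.2⟩

omit [Fintype V] [DecidableEq V] in
lemma restrict_edge_le {G : SimpleGraph V} {s : Set V} :
    (G.restrict s).edgeSet ⊆ G.edgeSet := by
  intro e he
  induction e with
  | _ a b => exact (SimpleGraph.mem_edgeSet _).2 ((SimpleGraph.mem_edgeSet _).1 he).1

lemma card_mem_sym2 (e : Sym2 V) (he : ¬e.IsDiag) :
    (Finset.univ.filter (fun v => v ∈ e)).card = 2 := by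
  induction e with
  | _ a b =>
    have hab : a ≠ b := by simpa using he
    have : (Finset.univ.filter (fun v => v ∈ s(a, b))) = {a, b} := by
      ext v; simp [Sym2.mem_iff]
    rw [this, Finset.card_insert_of_notMem (by simp [hab]), Finset.card_singleton]

lemma pdeg_eq_sum' (C : Finset (Sym2 V)) (v : V) :
    pdeg C v = ∑ e ∈ Finset.univ, (if e ∈ C ∧ v ∈ e then (1 : ZMod 2) else 0) := by
  classical
  rw [pdeg, Finset.card_filter, Nat.cast_sum]
  rw [← Finset.sum_subset (Finset.subset_univ C) (by intro e _ he; simp [he])]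
  exact Finset.sum_congr rfl fun e he => by simp [he]

lemma sum_pdeg (C : Finset (Sym2 V)) (hC : ∀ e ∈ C, ¬ e.IsDiag) :
    ∑ v, pdeg C v = 0 := by
  classical
  have : ∑ v, pdeg C v =
      ∑ e ∈ Finset.univ, ∑ v ∈ Finset.univ, (if e ∈ C ∧ v ∈ e then (1 : ZMod 2) else 0) := by
    rw [← Finset.sum_comm]
    exact Finset.sum_congr rfl fun v _ => pdeg_eq_sum' C v
  rw [this]
  refine Finset.sum_eq_zero fun e _ => ?_
  by_cases he : e ∈ C
  · have : ∑ v ∈ Finset.univ, (if e ∈ C ∧ v ∈ e then (1 : ZMod 2) else 0)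
        = ((Finset.univ.filter (fun v => v ∈ e)).card : ZMod 2) := by
      rw [Finset.sum_boole]
      congr 1
      exact Finset.card_nbij id (fun a ha => by simp_all) (fun a ha b hb => by simp)
        (fun a ha => ⟨a, by simp_all, rfl⟩)
    rw [this, card_mem_sym2 e (hC e he)]
    decide
  · simp [he]

/-- if `(X, Y)` is a separation of `G` with `G[X ∩ Y]` connected,
`X \ Y` and `Y \ X` nonempty, `bn(G[X]) ≤ b₁` and `bn(G[Y]) ≤ b₂`, then
`bn(G) ≤ b₁ + b₂`. -/
theorem bn_le_of_connected_separator (G : SimpleGraph V) (X Y : Set V)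
    (hXY : X ∪ Y = Set.univ) (hsep : ∀ x ∈ X \ Y, ∀ y ∈ Y \ X, ¬ G.Adj x y)
    (hconn : (G.induce (X ∩ Y)).Connected)
    (hXne : (X \ Y).Nonempty) (hYne : (Y \ X).Nonempty)
    (b₁ b₂ : ℕ) (hb₁ : (G.restrict X).bn ≤ b₁) (hb₂ : (G.restrict Y).bn ≤ b₂) :
    G.bn ≤ b₁ + b₂ := by
  classical
  obtain ⟨B₁, hB₁cyc, hB₁gen, hB₁cnt⟩ := exists_basis (G.restrict X).edgeSet
  obtain ⟨B₂, hB₂cyc, hB₂gen, hB₂cnt⟩ := exists_basis (G.restrict Y).edgeSet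
  obtain ⟨⟨r, hr⟩⟩ := hconn.nonempty
  have hreach : ∀ t ∈ X ∩ Y, (G.restrict (X ∩ Y)).Reachable t r := by
    intro t ht
    let F : G.induce (X ∩ Y) →g G.restrict (X ∩ Y) :=
      { toFun := Subtype.val, map_rel' := fun {u v} hadj => ⟨hadj, u.2, v.2⟩ }
    exact (hconn.preconnected ⟨t, ht⟩ ⟨r, hr⟩).map F
  have hcover : ∀ e ∈ G.edgeSet,
      e ∈ (G.restrict X).edgeSet ∨ e ∈ (G.restrict Y).edgeSet := by
    intro e he
    induction e with
    | _ a b =>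
      rw [SimpleGraph.mem_edgeSet] at he
      have ha : a ∈ X ∪ Y := hXY ▸ Set.mem_univ a
      have hb : b ∈ X ∪ Y := hXY ▸ Set.mem_univ b
      by_cases haX : a ∈ X <;> by_cases hbX : b ∈ X
      · exact Or.inl ((SimpleGraph.mem_edgeSet _).2 ⟨he, haX, hbX⟩)
      · have hbY : b ∈ Y := hb.resolve_left hbX
        by_cases haY : a ∈ Y
        · exact Or.inr ((SimpleGraph.mem_edgeSet _).2 ⟨he, haY, hbY⟩)
        · exact absurd he (hsep a ⟨haX, haY⟩ b ⟨hbY, hbX⟩)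
      · have haY : a ∈ Y := ha.resolve_left haX
        by_cases hbY : b ∈ Y
        · exact Or.inr ((SimpleGraph.mem_edgeSet _).2 ⟨he, haY, hbY⟩)
        · exact absurd he.symm (hsep b ⟨hbX, hbY⟩ a ⟨haY, haX⟩)
      · exact Or.inr ((SimpleGraph.mem_edgeSet _).2
          ⟨he, ha.resolve_left haX, hb.resolve_left hbX⟩)
  have hedgeX : ∀ e ∈ G.edgeSet, ∀ t ∈ e, t ∈ X → t ∉ Y →
      e ∈ (G.restrict X).edgeSet := by
    intro e he
    induction e with
    | _ a b =>
      intro t ht htX htY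
      rw [SimpleGraph.mem_edgeSet] at he
      rw [SimpleGraph.mem_edgeSet]
      rcases Sym2.mem_iff.1 ht with rfl | rfl
      · refine ⟨he, htX, ?_⟩
        by_contra hbX
        have hbY : b ∈ Y := (hXY ▸ Set.mem_univ b : b ∈ X ∪ Y).resolve_left hbX
        exact hsep t ⟨htX, htY⟩ b ⟨hbY, hbX⟩ he
      · refine ⟨he, ?_, htX⟩
        by_contra haX
        have haY : a ∈ Y := (hXY ▸ Set.mem_univ a : a ∈ X ∪ Y).resolve_left haX
        exact hsep t ⟨htX, htY⟩ a ⟨haY, haX⟩ he.symm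
  rw [SimpleGraph.bn, bnSet]
  apply Nat.sInf_le
  refine ⟨B₁ ++ B₂, ?_, ?_, ?_⟩
  · intro Z hZ
    rcases List.mem_append.1 hZ with h | h
    · exact ⟨fun e he => restrict_edge_le ((hB₁cyc Z h).1 e he), (hB₁cyc Z h).2⟩
    · exact ⟨fun e he => restrict_edge_le ((hB₂cyc Z h).1 e he), (hB₂cyc Z h).2⟩
  · intro C hC
    obtain ⟨hCE, hCev⟩ := hC
    set C₁ := C.filter (fun e => e ∈ (G.restrict X).edgeSet) with hC₁def
    set C₂ := C \ C₁ with hC₂def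
    have hC₁sub : C₁ ⊆ C := Finset.filter_subset _ _
    have hdisj : Disjoint C₁ C₂ := Finset.disjoint_sdiff
    have hCsplit : C = symmDiff C₁ C₂ := by
      rw [hdisj.symmDiff_eq_sup, Finset.sup_eq_union]
      exact (Finset.union_sdiff_of_subset hC₁sub).symm
    have hpdegC : ∀ v, pdeg C v = 0 := fun v => (even_iff_pdeg C v).1 (hCev v)
    have hC₂eq : ∀ v, pdeg C₂ v = pdeg C₁ v := by
      intro v
      have h0 : pdeg C₁ v + pdeg C₂ v = 0 := by
        rw [← pdeg_symmDiff, ← hCsplit]; exact hpdegC v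
      exact (eq_neg_of_add_eq_zero_right h0).trans (CharTwo.neg_eq _)
    have hC₁X : ∀ v, v ∉ X → pdeg C₁ v = 0 := by
      intro v hv
      have hemp : C₁.filter (fun e => v ∈ e) = ∅ := by
        rw [Finset.filter_eq_empty_iff]
        intro e heC₁ hve
        exact hv (restrict_mem_of_mem_edge (Finset.mem_filter.1 heC₁).2 hve)
      rw [pdeg, hemp]; simp
    have hC₁XY : ∀ v, v ∈ X → v ∉ Y → pdeg C₁ v = pdeg C v := by
      intro v hvX hvY
      have hfe : C₁.filter (fun e => v ∈ e) = C.filter (fun e => v ∈ e) := by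
        apply Finset.Subset.antisymm (Finset.filter_subset_filter _ hC₁sub)
        intro e he
        rcases Finset.mem_filter.1 he with ⟨heC, hve⟩
        exact Finset.mem_filter.2
          ⟨Finset.mem_filter.2 ⟨heC, hedgeX e (hCE e heC) v hve hvX hvY⟩, hve⟩
      rw [pdeg, pdeg, hfe]
    set T := Finset.univ.filter (fun v => pdeg C₁ v = 1) with hTdef
    have hTmem : ∀ v, v ∈ T ↔ pdeg C₁ v = 1 := fun v => by simp [hTdef]
    have hTsub : ∀ t ∈ T, t ∈ X ∩ Y := by
      intro t ht
      have h1 : pdeg C₁ t = 1 := (hTmem t).1 ht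
      by_contra hns
      have h0 : pdeg C₁ t = 0 := by
        by_cases htX : t ∈ X
        · have htY : t ∉ Y := fun h => hns ⟨htX, h⟩
          rw [hC₁XY t htX htY]; exact hpdegC t
        · exact hC₁X t htX
      rw [h0] at h1
      exact (by decide : (0 : ZMod 2) ≠ 1) h1
    have hTcard : (T.card : ZMod 2) = 0 := by
      have hnd : ∀ e ∈ C₁, ¬ e.IsDiag := fun e he =>
        (G.restrict X).not_isDiag_of_mem_edgeSet (Finset.mem_filter.1 he).2
      have hsum := sum_pdeg C₁ hnd
      have hTc : ∑ v, pdeg C₁ v = (T.card : ZMod 2) := by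
        rw [hTdef, ← Finset.sum_boole]
        exact Finset.sum_congr rfl fun v _ => by
          rcases zmod2_cases (pdeg C₁ v) with h | h <;> simp [h]
      rw [← hTc, hsum]
    obtain ⟨J, hJE, hJd⟩ := exists_join G (X ∩ Y) r hreach T hTsub
    have hJdeg : ∀ v, pdeg J v = if v ∈ T then 1 else 0 := by
      intro v; rw [hJd v, hTcard]; ring
    have key : ∀ D : Finset (Sym2 V), (∀ v, pdeg D v = pdeg C₁ v) →
        ∀ v, pdeg (symmDiff D J) v = 0 := by
      intro D hD v
      rw [pdeg_symmDiff, hD, hJdeg]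
      by_cases hv : v ∈ T
      · rw [if_pos hv, (hTmem v).1 hv]; decide
      · rw [if_neg hv]
        rcases zmod2_cases (pdeg C₁ v) with h | h
        · rw [h]; decide
        · exact absurd ((hTmem v).2 h) hv
    have hcyc₁ : IsF2CycleIn (G.restrict X).edgeSet (symmDiff C₁ J) := by
      constructor
      · intro e he
        rcases Finset.mem_symmDiff.1 he with ⟨h1, _⟩ | ⟨h1, _⟩
        · exact (Finset.mem_filter.1 h1).2
        · exact restrict_edge_mono Set.inter_subset_left (hJE e h1)
      · intro v; rw [even_iff_pdeg]; exact key C₁ (fun _ => rfl) v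
    have hcyc₂ : IsF2CycleIn (G.restrict Y).edgeSet (symmDiff C₂ J) := by
      constructor
      · intro e he
        rcases Finset.mem_symmDiff.1 he with ⟨h1, _⟩ | ⟨h1, _⟩
        · have heC : e ∈ C := (Finset.mem_sdiff.1 h1).1
          have hne₁ : e ∉ C₁ := (Finset.mem_sdiff.1 h1).2
          rcases hcover e (hCE e heC) with h | h
          · exact absurd (Finset.mem_filter.2 ⟨heC, h⟩) hne₁
          · exact h
        · exact restrict_edge_mono Set.inter_subset_right (hJE e h1)
      · intro v; rw [even_iff_pdeg]; exact key C₂ hC₂eq v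
    obtain ⟨l₁, hl₁s, hl₁e⟩ := hB₁gen _ hcyc₁
    obtain ⟨l₂, hl₂s, hl₂e⟩ := hB₂gen _ hcyc₂
    refine ⟨l₁ ++ l₂, hl₁s.append hl₂s, ?_⟩
    rw [foldr_symmDiff_append, ← hl₁e, ← hl₂e, hCsplit]
    rw [symmDiff_assoc, symmDiff_comm C₂ J, ← symmDiff_assoc J J C₂,
      symmDiff_self, bot_symmDiff]
  · intro e
    rw [List.countP_append]
    exact add_le_add (le_trans (hB₁cnt e) hb₁) (le_trans (hB₂cnt e) hb₂)
end
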